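/- Let 0 < γ < 1, let k be a positive integer with k ≤ n, and let M be a set of n-bit strings with |M| ≤ 2^{γn}. Let π be a uniformly random permutation of the set of all n-bit strings, and let π(M) be the image of M under π. Let q be the probability that there exist an n-bit string y and a set of k distinct indices {j_1, ..., j_k} ⊆ {1, ..., n} such that {y⊕e_{j_1}, ..., y⊕e_{j_k}} ⊆ π(M). Then q ≤ n^k · 2^{n[1 - k(1-γ)]}. -/

import Mathlib

open scoped Classical
open Nat

/-- Bit strings of length `n`. -/
abbrev BitStr (n : ℕ) := Fin n → Bool

/-- `z ⊕ e_i`: the string `z` with bit `i` flipped. -/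
def flipBit {n : ℕ} (z : BitStr n) (i : Fin n) : BitStr n := Function.update z i (!z i)

/-- Probability of an event under a uniformly random permutation of `{0,1}^n`. -/
noncomputable def prPerm (n : ℕ) (P : Equiv.Perm (BitStr n) → Prop) : ℝ :=
  (Finset.univ.filter P).card / (Fintype.card (Equiv.Perm (BitStr n)))

lemma flipBit_injective {n : ℕ} (y : BitStr n) : Function.Injective (flipBit y) := by
  intro i j hij
  by_contra hne
  have := congrFun hij i
  simp [flipBit, Function.update, hne, Ne.symm hne] at this

lemma card_filter_fix' {α : Type*} [Fintype α] [DecidableEq α] (S : Finset α) :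
    (Finset.univ.filter fun π : Equiv.Perm α => ∀ z ∈ S, π z = z).card
      = (Fintype.card α - S.card)! := by
  classical
  have e : {π : Equiv.Perm α // ∀ z ∈ S, π z = z} ≃ Equiv.Perm {x : α // x ∉ S} := by
    refine (Equiv.subtypeEquivRight ?_).trans
      (Equiv.Perm.subtypeEquivSubtypePerm (fun x => x ∉ S)).symm
    intro π
    constructor
    · intro h a ha; exact h a (not_not.mp ha)
    · intro h z hz; exact h z (not_not.mpr hz)
  have h1 := Fintype.card_congr e
  rw [Fintype.card_perm, Fintype.card_subtype] at h1
  have h2 : Fintype.card {x : α // x ∉ S} = Fintype.card α - S.card := by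
    have := Fintype.card_subtype_compl (fun x => x ∈ S)
    simpa [Fintype.card_subtype] using this
  rw [h2] at h1
  convert h1 using 2

lemma card_filter_eqfun_le {α : Type*} [Fintype α] [DecidableEq α] (S : Finset α) (g : α → α) :
    (Finset.univ.filter fun π : Equiv.Perm α => ∀ z ∈ S, π z = g z).card
      ≤ (Fintype.card α - S.card)! := by
  classical
  rcases Finset.eq_empty_or_nonempty
      (Finset.univ.filter fun π : Equiv.Perm α => ∀ z ∈ S, π z = g z) with h | ⟨σ, hσ⟩
  · simp [h]
  · rw [← card_filter_fix' S]
    have hσ' : ∀ z ∈ S, σ z = g z := by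
      simpa using (Finset.mem_filter.mp hσ).2
    apply Finset.card_le_card_of_injOn (fun π => σ⁻¹ * π)
    · intro π hπ
      have hπ' : ∀ z ∈ S, π z = g z := by simpa using (Finset.mem_filter.mp hπ).2
      simp only [Finset.mem_coe, Finset.mem_filter, Finset.mem_univ, true_and]
      intro z hz
      simp [Equiv.Perm.mul_apply, hπ' z hz, ← hσ' z hz]
    · intro a _ b _ h
      exact mul_left_cancel h

lemma card_filter_mapsTo_le {α : Type*} [Fintype α] [DecidableEq α] (S M : Finset α) :
    (Finset.univ.filter fun π : Equiv.Perm α => ∀ z ∈ S, π z ∈ M).card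
      ≤ M.card.descFactorial S.card * (Fintype.card α - S.card)! := by
  classical
  set F : (↥S ↪ ↥M) → α → α := fun g z => if h : z ∈ S then (g ⟨z, h⟩ : α) else z with hF
  have hsub : (Finset.univ.filter fun π : Equiv.Perm α => ∀ z ∈ S, π z ∈ M)
      ⊆ (Finset.univ : Finset (↥S ↪ ↥M)).biUnion
          (fun g => Finset.univ.filter fun π : Equiv.Perm α => ∀ z ∈ S, π z = F g z) := by
    intro π hπ
    have hπ' : ∀ z ∈ S, π z ∈ M := by simpa using (Finset.mem_filter.mp hπ).2
    refine Finset.mem_biUnion.mpr ⟨⟨fun z => ⟨π z, hπ' z z.2⟩, ?_⟩, Finset.mem_univ _, ?_⟩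
    · intro a b hab
      exact Subtype.ext (π.injective (congrArg Subtype.val hab))
    · simp only [Finset.mem_filter, Finset.mem_univ, true_and]
      intro z hz
      simp [hF, hz]
      rfl
  calc (Finset.univ.filter fun π : Equiv.Perm α => ∀ z ∈ S, π z ∈ M).card
      ≤ ∑ g : ↥S ↪ ↥M, (Finset.univ.filter
          fun π : Equiv.Perm α => ∀ z ∈ S, π z = F g z).card :=
        le_trans (Finset.card_le_card hsub) (Finset.card_biUnion_le)
    _ ≤ ∑ _g : ↥S ↪ ↥M, (Fintype.card α - S.card)! :=
        Finset.sum_le_sum fun g _ => card_filter_eqfun_le S (F g)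
    _ = Fintype.card (↥S ↪ ↥M) * (Fintype.card α - S.card)! := by
        rw [Finset.sum_const, Finset.card_univ, smul_eq_mul]
    _ = M.card.descFactorial S.card * (Fintype.card α - S.card)! := by
        rw [Fintype.card_embedding_eq, Fintype.card_coe, Fintype.card_coe]

lemma dF_mul_pow_le (m N k : ℕ) (h : m ≤ N) :
    m.descFactorial k * N ^ k ≤ m ^ k * N.descFactorial k := by
  have h1 : N ^ k = ∏ _i ∈ Finset.range k, N := by simp
  have h2 : m ^ k = ∏ _i ∈ Finset.range k, m := by simp
  rw [Nat.descFactorial_eq_prod_range, Nat.descFactorial_eq_prod_range, h1, h2,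
    ← Finset.prod_mul_distrib, ← Finset.prod_mul_distrib]
  apply Finset.prod_le_prod'
  intro i _
  rcases Nat.le_total i m with him | him
  · rw [Nat.sub_mul, Nat.mul_sub]
    refine Nat.sub_le_sub_left ?_ _
    calc m * i ≤ N * i := Nat.mul_le_mul_right i h
      _ = i * N := Nat.mul_comm _ _
  · rw [Nat.sub_eq_zero_of_le him, Nat.zero_mul]
    exact Nat.zero_le _

lemma card_event_le {n : ℕ} (M : Finset (BitStr n)) (y : BitStr n) (J : Finset (Fin n)) :
    (Finset.univ.filter fun π : Equiv.Perm (BitStr n) =>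
        ∀ j ∈ J, flipBit y j ∈ M.image π).card
      ≤ M.card.descFactorial J.card * (2 ^ n - J.card)! := by
  set S := J.image (flipBit y) with hS
  have hScard : S.card = J.card := Finset.card_image_of_injective J (flipBit_injective y)
  have hcardBS : Fintype.card (BitStr n) = 2 ^ n := by simp
  have hbij : (Finset.univ.filter fun π : Equiv.Perm (BitStr n) =>
        ∀ j ∈ J, flipBit y j ∈ M.image π).card
      = (Finset.univ.filter fun π : Equiv.Perm (BitStr n) => ∀ z ∈ S, π z ∈ M).card := by
    refine Finset.card_bij' (fun π _ => π⁻¹) (fun π _ => π⁻¹) ?_ ?_ ?_ ?_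
    · intro π hπ
      have hπ' := (Finset.mem_filter.mp hπ).2
      simp only [Finset.mem_filter, Finset.mem_univ, true_and]
      intro z hz
      rw [hS, Finset.mem_image] at hz
      obtain ⟨j, hj, rfl⟩ := hz
      obtain ⟨x, hx, hxe⟩ := Finset.mem_image.mp (hπ' j hj)
      rw [← hxe, Equiv.Perm.inv_def, Equiv.symm_apply_apply]
      exact hx
    · intro π hπ
      have hπ' := (Finset.mem_filter.mp hπ).2
      simp only [Finset.mem_filter, Finset.mem_univ, true_and]
      intro j hj
      have hz : flipBit y j ∈ S := by
        rw [hS]; exact Finset.mem_image_of_mem _ hj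
      exact Finset.mem_image.mpr ⟨π (flipBit y j), hπ' _ hz, π.symm_apply_apply _⟩
    · intro π _; exact inv_inv π
    · intro π _; exact inv_inv π
  have hfin := card_filter_mapsTo_le S M
  rw [hScard, hcardBS] at hfin
  rw [hbij]
  exact hfin

/-- If `|M| ≤ 2^{γn}` with `0 < γ < 1` and `1 ≤ k ≤ n`, then the probability that there
exist a string `y` and `k` distinct bit positions `j_1, …, j_k` with
`{y⊕e_{j_1}, …, y⊕e_{j_k}} ⊆ π(M)` is at most `n^k · 2^{n(1 - k(1-γ))}`. -/
theorem stmt11 (n : ℕ) (γ : ℝ) (hγ0 : 0 < γ) (hγ1 : γ < 1)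
    (k : ℕ) (hk : 1 ≤ k) (hkn : k ≤ n)
    (M : Finset (BitStr n)) (hM : (M.card : ℝ) ≤ (2 : ℝ) ^ (γ * n)) :
    prPerm n (fun π => ∃ y : BitStr n, ∃ J : Finset (Fin n), J.card = k ∧
        ∀ j ∈ J, flipBit y j ∈ M.image π) ≤
      (n : ℝ) ^ k * (2 : ℝ) ^ ((n : ℝ) * (1 - k * (1 - γ))) := by
  have hcardBS : Fintype.card (BitStr n) = 2 ^ n := by simp
  set N := 2 ^ n with hN
  have hkN : k ≤ N := le_trans hkn (Nat.le_of_lt (Nat.lt_two_pow_self))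
  have hmN : M.card ≤ N := by
    calc M.card ≤ Fintype.card (BitStr n) := Finset.card_le_univ M
      _ = N := hcardBS
  have hcount : ∀ inst : DecidablePred (fun π : Equiv.Perm (BitStr n) => ∃ y : BitStr n,
        ∃ J : Finset (Fin n), J.card = k ∧ ∀ j ∈ J, flipBit y j ∈ M.image π),
      (@Finset.filter _ _ inst Finset.univ).card
        ≤ N * (n.choose k * (M.card.descFactorial k * (N - k)!)) := by
    intro inst
    have hsub : (@Finset.filter _ _ inst Finset.univ)
        ⊆ (Finset.univ : Finset (BitStr n)).biUnion fun y =>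
            ((Finset.univ : Finset (Fin n)).powersetCard k).biUnion fun J =>
              Finset.univ.filter fun π : Equiv.Perm (BitStr n) =>
                ∀ j ∈ J, flipBit y j ∈ M.image π := by
      intro π hπ
      obtain ⟨y, J, hJ, hall⟩ := (Finset.mem_filter.mp hπ).2
      refine Finset.mem_biUnion.mpr ⟨y, Finset.mem_univ _, Finset.mem_biUnion.mpr ⟨J, ?_, ?_⟩⟩
      · exact Finset.mem_powersetCard.mpr ⟨Finset.subset_univ _, hJ⟩
      · exact Finset.mem_filter.mpr ⟨Finset.mem_univ _, hall⟩
    refine le_trans (Finset.card_le_card hsub) ?_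
    refine le_trans Finset.card_biUnion_le ?_
    have hinner : ∀ y : BitStr n,
        (((Finset.univ : Finset (Fin n)).powersetCard k).biUnion fun J =>
            Finset.univ.filter fun π : Equiv.Perm (BitStr n) =>
              ∀ j ∈ J, flipBit y j ∈ M.image π).card
          ≤ n.choose k * (M.card.descFactorial k * (N - k)!) := by
      intro y
      refine le_trans Finset.card_biUnion_le ?_
      have hterm : ∀ J ∈ (Finset.univ : Finset (Fin n)).powersetCard k,
          (Finset.univ.filter fun π : Equiv.Perm (BitStr n) =>
              ∀ j ∈ J, flipBit y j ∈ M.image π).card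
            ≤ M.card.descFactorial k * (N - k)! := by
        intro J hJ
        have hJc : J.card = k := (Finset.mem_powersetCard.mp hJ).2
        have := card_event_le M y J
        rwa [hJc] at this
      refine le_trans (Finset.sum_le_sum hterm) ?_
      rw [Finset.sum_const, smul_eq_mul, Finset.card_powersetCard, Finset.card_univ,
        Fintype.card_fin]
    refine le_trans (Finset.sum_le_sum fun y _ => hinner y) ?_
    rw [Finset.sum_const, smul_eq_mul, Finset.card_univ, hcardBS]
  have hfactpos : (0:ℝ) < (N ! : ℝ) := by exact_mod_cast Nat.factorial_pos N
  have h2 : (0:ℝ) < 2 := two_pos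
  have hNpos : (0:ℝ) < (N : ℝ) := by positivity
  have hdFNpos : (0:ℝ) < (N.descFactorial k : ℝ) := by
    have : N.descFactorial k ≠ 0 := fun h =>
      absurd (Nat.descFactorial_eq_zero_iff_lt.mp h) (not_lt.mpr hkN)
    exact_mod_cast Nat.pos_of_ne_zero this
  rw [prPerm, Fintype.card_perm, hcardBS]
  calc ((@Finset.filter (Equiv.Perm (BitStr n))
          (fun π => ∃ y : BitStr n, ∃ J : Finset (Fin n), J.card = k ∧
            ∀ j ∈ J, flipBit y j ∈ M.image π)
          (fun a => Classical.propDecidable _) Finset.univ).card : ℝ) / (N ! : ℝ)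
      ≤ ((N * (n.choose k * (M.card.descFactorial k * (N - k)!)) : ℕ) : ℝ) / (N ! : ℝ) := by
        gcongr
        exact Nat.cast_le.mpr (hcount _)
    _ = (N : ℝ) * (n.choose k : ℝ) *
          ((M.card.descFactorial k : ℝ) / (N.descFactorial k : ℝ)) := by
        have hfe : (N ! : ℝ) = (N.descFactorial k : ℝ) * ((N - k)! : ℝ) := by
          rw [mul_comm]
          exact_mod_cast (Nat.factorial_mul_descFactorial hkN).symm
        rw [hfe]
        push_cast
        have h3 : (((N - k)! : ℕ) : ℝ) ≠ 0 := by positivity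
        have h4 : ((N.descFactorial k : ℕ) : ℝ) ≠ 0 := ne_of_gt hdFNpos
        field_simp
    _ ≤ (N : ℝ) * (n : ℝ) ^ k * ((M.card : ℝ) ^ k / (N : ℝ) ^ k) := by
        have hchoose : (n.choose k : ℝ) ≤ (n : ℝ) ^ k := by
          exact_mod_cast Nat.choose_le_pow n k
        have hdf : (M.card.descFactorial k : ℝ) / (N.descFactorial k : ℝ)
            ≤ (M.card : ℝ) ^ k / (N : ℝ) ^ k := by
          rw [div_le_div_iff₀ hdFNpos (by positivity)]
          exact_mod_cast dF_mul_pow_le M.card N k hmN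
        refine mul_le_mul (mul_le_mul_of_nonneg_left hchoose (le_of_lt hNpos)) hdf
          (by positivity) (by positivity)
    _ ≤ (N : ℝ) * (n : ℝ) ^ k * (((2:ℝ) ^ (γ * (n:ℝ))) ^ k / (N : ℝ) ^ k) := by
        have hMk : (M.card : ℝ) ^ k ≤ ((2:ℝ) ^ (γ * (n:ℝ))) ^ k :=
          pow_le_pow_left₀ (Nat.cast_nonneg _) hM k
        gcongr
    _ = (n : ℝ) ^ k * (2 : ℝ) ^ ((n : ℝ) * (1 - k * (1 - γ))) := by
        have hNreal : ((N:ℕ) : ℝ) = (2:ℝ) ^ ((n:ℝ)) := by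
          rw [hN]
          push_cast
          rw [Real.rpow_natCast]
        rw [hNreal, ← Real.rpow_natCast ((2:ℝ) ^ (γ * (n:ℝ))) k,
          ← Real.rpow_mul (le_of_lt h2), ← Real.rpow_natCast ((2:ℝ) ^ ((n:ℝ))) k,
          ← Real.rpow_mul (le_of_lt h2), div_eq_mul_inv, ← Real.rpow_neg (le_of_lt h2)]
        calc (2:ℝ)^((n:ℝ)) * (n:ℝ)^k *
              ((2:ℝ)^(γ*(n:ℝ)*(k:ℕ)) * (2:ℝ)^(-((n:ℝ)*(k:ℕ))))
            = (n:ℝ)^k * ((2:ℝ)^((n:ℝ)) * (2:ℝ)^(γ*(n:ℝ)*(k:ℕ)) * (2:ℝ)^(-((n:ℝ)*(k:ℕ)))) := by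
              ring
          _ = (n:ℝ)^k * (2:ℝ)^((n:ℝ) + γ*(n:ℝ)*(k:ℕ) + -((n:ℝ)*(k:ℕ))) := by
              rw [← Real.rpow_add h2, ← Real.rpow_add h2]
          _ = (n : ℝ) ^ k * (2 : ℝ) ^ ((n : ℝ) * (1 - k * (1 - γ))) := by
              rw [show (n:ℝ) + γ*(n:ℝ)*(k:ℕ) + -((n:ℝ)*(k:ℕ))
                  = (n : ℝ) * (1 - (k:ℕ) * (1 - γ)) by push_cast; ring]
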